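/- The even lattices U ⊕ N_8 and U(2) ⊕ D_4 ⊕ D_4 of signature (9,1) are isometric, where N_8 is the lattice generated by a1,...,a8 with (a_i,a_j) = 2δ_ij together with (a1 + ... + a8)/2, and D_4 = {x ∈ ℤ^4 : x_1 + ... + x_4 even} with the Euclidean form multiplied by 1 (i.e., the even sublattice of Euclidean ℤ^4). -/
import Mathlib


/-- The bilinear form of `U ⊕ N₈` on `ℚ^10`: coordinates `(c1, c2)` for `U` with
`(c1,c2) = -1`, and the remaining 8 coordinates for `N₈` with form `2·dot`
(the generators `a_i` are the standard basis vectors, `(a_i,a_j) = 2δ_ij`). -/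
def BA (x y : Fin 10 → ℚ) : ℚ :=
  -(x 0 * y 1 + x 1 * y 0) + 2 * ∑ i : Fin 8, x i.succ.succ * y i.succ.succ

/-- The bilinear form of `U(2) ⊕ D₄ ⊕ D₄` on `ℚ^10`: coordinates `(c1, c2)` for `U(2)`
with `(c1,c2) = -2`, and the remaining 8 coordinates Euclidean (two copies of `ℤ^4`
containing the two copies of `D₄`). -/
def BB (x y : Fin 10 → ℚ) : ℚ :=
  -2 * (x 0 * y 1 + x 1 * y 0) + ∑ i : Fin 8, x i.succ.succ * y i.succ.succ

/-- The lattice `U ⊕ N₈ ⊂ ℚ^10`: `N₈ = ℤ^8 + ℤ·(a1+…+a8)/2`. -/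
def LA : Set (Fin 10 → ℚ) :=
  {x | (∃ a : ℤ, x 0 = a) ∧ (∃ a : ℤ, x 1 = a) ∧
    ((∀ i : Fin 8, ∃ k : ℤ, x i.succ.succ = k) ∨
      (∀ i : Fin 8, ∃ k : ℤ, x i.succ.succ = k + 1/2))}

/-- The lattice `U(2) ⊕ D₄ ⊕ D₄ ⊂ ℚ^10`: integer vectors whose coordinates `2,3,4,5`
have even sum and whose coordinates `6,7,8,9` have even sum. -/
def LB : Set (Fin 10 → ℚ) :=
  {x | (∃ a : ℤ, x 0 = a) ∧ (∃ a : ℤ, x 1 = a) ∧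
    (∀ i : Fin 8, ∃ k : ℤ, x i.succ.succ = k) ∧
    (∃ m : ℤ, x 2 + x 3 + x 4 + x 5 = 2 * m) ∧
    (∃ m : ℤ, x 6 + x 7 + x 8 + x 9 = 2 * m)}


def Ff : (Fin 10 → ℚ) → Fin 10 → ℚ := fun x =>
  ![x 0 + x 1 - x 2 + x 4 + x 5 + x 6,
    x 0 + x 1 - x 3 + x 4 + x 5 + x 6,
    x 0 + x 5 + x 6,
    x 0 + x 1 + 2 * x 4 + x 5 + x 6,
    -x 1 - x 5 - x 6,
    -x 5 + x 6,
    x 0 + x 1 - x 2 - x 3 + x 4 + x 5 + x 6 - x 7,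
    x 0 + x 1 - x 2 - x 3 + x 4 + x 5 + x 6 + x 7,
    -x 8 - x 9,
    x 8 - x 9]

def Gf : (Fin 10 → ℚ) → Fin 10 → ℚ := fun y =>
  ![2 * y 0 + 2 * y 1 - y 3 + y 4 - y 6 - y 7,
    2 * y 0 + 2 * y 1 - y 2 - y 3 - y 6 - y 7,
    y 1 - y 6 / 2 - y 7 / 2,
    y 0 - y 6 / 2 - y 7 / 2,
    -y 0 - y 1 + y 3 + y 6 / 2 + y 7 / 2,
    -y 0 - y 1 + y 2 / 2 + y 3 / 2 - y 4 / 2 - y 5 / 2 + y 6 / 2 + y 7 / 2,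
    -y 0 - y 1 + y 2 / 2 + y 3 / 2 - y 4 / 2 + y 5 / 2 + y 6 / 2 + y 7 / 2,
    -y 6 / 2 + y 7 / 2,
    -y 8 / 2 + y 9 / 2,
    -y 8 / 2 - y 9 / 2]

lemma FA0 (x : Fin 10 → ℚ) : Ff x 0 = x 0 + x 1 - x 2 + x 4 + x 5 + x 6 := rfl
lemma FA1 (x : Fin 10 → ℚ) : Ff x 1 = x 0 + x 1 - x 3 + x 4 + x 5 + x 6 := rfl
lemma FA2 (x : Fin 10 → ℚ) : Ff x 2 = x 0 + x 5 + x 6 := rfl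
lemma FA3 (x : Fin 10 → ℚ) : Ff x 3 = x 0 + x 1 + 2 * x 4 + x 5 + x 6 := rfl
lemma FA4 (x : Fin 10 → ℚ) : Ff x 4 = -x 1 - x 5 - x 6 := rfl
lemma FA5 (x : Fin 10 → ℚ) : Ff x 5 = -x 5 + x 6 := rfl
lemma FA6 (x : Fin 10 → ℚ) : Ff x 6 = x 0 + x 1 - x 2 - x 3 + x 4 + x 5 + x 6 - x 7 := rfl
lemma FA7 (x : Fin 10 → ℚ) : Ff x 7 = x 0 + x 1 - x 2 - x 3 + x 4 + x 5 + x 6 + x 7 := rfl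
lemma FA8 (x : Fin 10 → ℚ) : Ff x 8 = -x 8 - x 9 := rfl
lemma FA9 (x : Fin 10 → ℚ) : Ff x 9 = x 8 - x 9 := rfl

lemma GA0 (y : Fin 10 → ℚ) : Gf y 0 = 2 * y 0 + 2 * y 1 - y 3 + y 4 - y 6 - y 7 := rfl
lemma GA1 (y : Fin 10 → ℚ) : Gf y 1 = 2 * y 0 + 2 * y 1 - y 2 - y 3 - y 6 - y 7 := rfl
lemma GA2 (y : Fin 10 → ℚ) : Gf y 2 = y 1 - y 6 / 2 - y 7 / 2 := rfl
lemma GA3 (y : Fin 10 → ℚ) : Gf y 3 = y 0 - y 6 / 2 - y 7 / 2 := rfl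
lemma GA4 (y : Fin 10 → ℚ) : Gf y 4 = -y 0 - y 1 + y 3 + y 6 / 2 + y 7 / 2 := rfl
lemma GA5 (y : Fin 10 → ℚ) : Gf y 5 = -y 0 - y 1 + y 2 / 2 + y 3 / 2 - y 4 / 2 - y 5 / 2 + y 6 / 2 + y 7 / 2 := rfl
lemma GA6 (y : Fin 10 → ℚ) : Gf y 6 = -y 0 - y 1 + y 2 / 2 + y 3 / 2 - y 4 / 2 + y 5 / 2 + y 6 / 2 + y 7 / 2 := rfl
lemma GA7 (y : Fin 10 → ℚ) : Gf y 7 = -y 6 / 2 + y 7 / 2 := rfl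
lemma GA8 (y : Fin 10 → ℚ) : Gf y 8 = -y 8 / 2 + y 9 / 2 := rfl
lemma GA9 (y : Fin 10 → ℚ) : Gf y 9 = -y 8 / 2 - y 9 / 2 := rfl

lemma ss0 : (0 : Fin 8).succ.succ = (2 : Fin 10) := rfl
lemma ss1 : (1 : Fin 8).succ.succ = (3 : Fin 10) := rfl
lemma ss2 : (2 : Fin 8).succ.succ = (4 : Fin 10) := rfl
lemma ss3 : (3 : Fin 8).succ.succ = (5 : Fin 10) := rfl
lemma ss4 : (4 : Fin 8).succ.succ = (6 : Fin 10) := rfl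
lemma ss5 : (5 : Fin 8).succ.succ = (7 : Fin 10) := rfl
lemma ss6 : (6 : Fin 8).succ.succ = (8 : Fin 10) := rfl
lemma ss7 : (7 : Fin 8).succ.succ = (9 : Fin 10) := rfl

def fEquiv : (Fin 10 → ℚ) ≃ₗ[ℚ] (Fin 10 → ℚ) where
  toFun := Ff
  invFun := Gf
  map_add' x y := by
    funext i; fin_cases i
    · show Ff (x + y) 0 = Ff x 0 + Ff y 0
      simp only [FA0, Pi.add_apply]; ring
    · show Ff (x + y) 1 = Ff x 1 + Ff y 1
      simp only [FA1, Pi.add_apply]; ring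
    · show Ff (x + y) 2 = Ff x 2 + Ff y 2
      simp only [FA2, Pi.add_apply]; ring
    · show Ff (x + y) 3 = Ff x 3 + Ff y 3
      simp only [FA3, Pi.add_apply]; ring
    · show Ff (x + y) 4 = Ff x 4 + Ff y 4
      simp only [FA4, Pi.add_apply]; ring
    · show Ff (x + y) 5 = Ff x 5 + Ff y 5
      simp only [FA5, Pi.add_apply]; ring
    · show Ff (x + y) 6 = Ff x 6 + Ff y 6
      simp only [FA6, Pi.add_apply]; ring
    · show Ff (x + y) 7 = Ff x 7 + Ff y 7
      simp only [FA7, Pi.add_apply]; ring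
    · show Ff (x + y) 8 = Ff x 8 + Ff y 8
      simp only [FA8, Pi.add_apply]; ring
    · show Ff (x + y) 9 = Ff x 9 + Ff y 9
      simp only [FA9, Pi.add_apply]; ring
  map_smul' c x := by
    funext i; fin_cases i
    · show Ff (c • x) 0 = c * Ff x 0
      simp only [FA0, Pi.smul_apply, smul_eq_mul]; ring
    · show Ff (c • x) 1 = c * Ff x 1
      simp only [FA1, Pi.smul_apply, smul_eq_mul]; ring
    · show Ff (c • x) 2 = c * Ff x 2
      simp only [FA2, Pi.smul_apply, smul_eq_mul]; ring
    · show Ff (c • x) 3 = c * Ff x 3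
      simp only [FA3, Pi.smul_apply, smul_eq_mul]; ring
    · show Ff (c • x) 4 = c * Ff x 4
      simp only [FA4, Pi.smul_apply, smul_eq_mul]; ring
    · show Ff (c • x) 5 = c * Ff x 5
      simp only [FA5, Pi.smul_apply, smul_eq_mul]; ring
    · show Ff (c • x) 6 = c * Ff x 6
      simp only [FA6, Pi.smul_apply, smul_eq_mul]; ring
    · show Ff (c • x) 7 = c * Ff x 7
      simp only [FA7, Pi.smul_apply, smul_eq_mul]; ring
    · show Ff (c • x) 8 = c * Ff x 8
      simp only [FA8, Pi.smul_apply, smul_eq_mul]; ring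
    · show Ff (c • x) 9 = c * Ff x 9
      simp only [FA9, Pi.smul_apply, smul_eq_mul]; ring
  left_inv x := by
    funext i; fin_cases i
    · show Gf (Ff x) 0 = x 0
      simp only [GA0, FA0, FA1, FA2, FA3, FA4, FA5, FA6, FA7, FA8, FA9]; ring
    · show Gf (Ff x) 1 = x 1
      simp only [GA1, FA0, FA1, FA2, FA3, FA4, FA5, FA6, FA7, FA8, FA9]; ring
    · show Gf (Ff x) 2 = x 2
      simp only [GA2, FA0, FA1, FA2, FA3, FA4, FA5, FA6, FA7, FA8, FA9]; ring
    · show Gf (Ff x) 3 = x 3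
      simp only [GA3, FA0, FA1, FA2, FA3, FA4, FA5, FA6, FA7, FA8, FA9]; ring
    · show Gf (Ff x) 4 = x 4
      simp only [GA4, FA0, FA1, FA2, FA3, FA4, FA5, FA6, FA7, FA8, FA9]; ring
    · show Gf (Ff x) 5 = x 5
      simp only [GA5, FA0, FA1, FA2, FA3, FA4, FA5, FA6, FA7, FA8, FA9]; ring
    · show Gf (Ff x) 6 = x 6
      simp only [GA6, FA0, FA1, FA2, FA3, FA4, FA5, FA6, FA7, FA8, FA9]; ring
    · show Gf (Ff x) 7 = x 7
      simp only [GA7, FA0, FA1, FA2, FA3, FA4, FA5, FA6, FA7, FA8, FA9]; ring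
    · show Gf (Ff x) 8 = x 8
      simp only [GA8, FA0, FA1, FA2, FA3, FA4, FA5, FA6, FA7, FA8, FA9]; ring
    · show Gf (Ff x) 9 = x 9
      simp only [GA9, FA0, FA1, FA2, FA3, FA4, FA5, FA6, FA7, FA8, FA9]; ring
  right_inv y := by
    funext i; fin_cases i
    · show Ff (Gf y) 0 = y 0
      simp only [FA0, GA0, GA1, GA2, GA3, GA4, GA5, GA6, GA7, GA8, GA9]; ring
    · show Ff (Gf y) 1 = y 1
      simp only [FA1, GA0, GA1, GA2, GA3, GA4, GA5, GA6, GA7, GA8, GA9]; ring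
    · show Ff (Gf y) 2 = y 2
      simp only [FA2, GA0, GA1, GA2, GA3, GA4, GA5, GA6, GA7, GA8, GA9]; ring
    · show Ff (Gf y) 3 = y 3
      simp only [FA3, GA0, GA1, GA2, GA3, GA4, GA5, GA6, GA7, GA8, GA9]; ring
    · show Ff (Gf y) 4 = y 4
      simp only [FA4, GA0, GA1, GA2, GA3, GA4, GA5, GA6, GA7, GA8, GA9]; ring
    · show Ff (Gf y) 5 = y 5
      simp only [FA5, GA0, GA1, GA2, GA3, GA4, GA5, GA6, GA7, GA8, GA9]; ring
    · show Ff (Gf y) 6 = y 6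
      simp only [FA6, GA0, GA1, GA2, GA3, GA4, GA5, GA6, GA7, GA8, GA9]; ring
    · show Ff (Gf y) 7 = y 7
      simp only [FA7, GA0, GA1, GA2, GA3, GA4, GA5, GA6, GA7, GA8, GA9]; ring
    · show Ff (Gf y) 8 = y 8
      simp only [FA8, GA0, GA1, GA2, GA3, GA4, GA5, GA6, GA7, GA8, GA9]; ring
    · show Ff (Gf y) 9 = y 9
      simp only [FA9, GA0, GA1, GA2, GA3, GA4, GA5, GA6, GA7, GA8, GA9]; ring

/-- The even lattices `U ⊕ N₈` and `U(2) ⊕ D₄ ⊕ D₄` are isometric. -/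
theorem stmt11 :
    (∀ v ∈ LA, ∃ n : ℤ, BA v v = 2 * n) ∧
    (∀ v ∈ LB, ∃ n : ℤ, BB v v = 2 * n) ∧
    (∃ f : (Fin 10 → ℚ) ≃ₗ[ℚ] (Fin 10 → ℚ),
      ⇑f '' LA = LB ∧ ∀ x y, BB (f x) (f y) = BA x y) := by
  refine ⟨?_, ?_, fEquiv, ?_, ?_⟩
  · rintro v ⟨⟨a, ha⟩, ⟨b, hb⟩, hc | hc⟩
    · choose k hk using hc
      refine ⟨-(a*b) + (k 0 * k 0+k 1 * k 1+k 2 * k 2+k 3 * k 3+k 4 * k 4+k 5 * k 5+k 6 * k 6+k 7 * k 7), ?_⟩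
      simp only [BA, Fin.sum_univ_eight, hk, ha, hb]
      push_cast; ring
    · choose k hk using hc
      refine ⟨-(a*b) + (k 0 * k 0+k 1 * k 1+k 2 * k 2+k 3 * k 3+k 4 * k 4+k 5 * k 5+k 6 * k 6+k 7 * k 7) + (k 0+k 1+k 2+k 3+k 4+k 5+k 6+k 7) + 2, ?_⟩
      simp only [BA, Fin.sum_univ_eight, hk, ha, hb]
      push_cast; ring
  · rintro v ⟨⟨a, ha⟩, ⟨b, hb⟩, hc, ⟨m1, hm1⟩, ⟨m2, hm2⟩⟩
    choose k hk using hc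
    have h2 : v 2 = (k 0 : ℚ) := hk 0
    have h3 : v 3 = (k 1 : ℚ) := hk 1
    have h4 : v 4 = (k 2 : ℚ) := hk 2
    have h5 : v 5 = (k 3 : ℚ) := hk 3
    have h6 : v 6 = (k 4 : ℚ) := hk 4
    have h7 : v 7 = (k 5 : ℚ) := hk 5
    have h8 : v 8 = (k 6 : ℚ) := hk 6
    have h9 : v 9 = (k 7 : ℚ) := hk 7
    rw [h2, h3, h4, h5] at hm1
    rw [h6, h7, h8, h9] at hm2
    have he : Even ((k 0 - 1) * (k 0 - 1 + 1) + (k 1 - 1) * (k 1 - 1 + 1) + (k 2 - 1) * (k 2 - 1 + 1) + (k 3 - 1) * (k 3 - 1 + 1) + (k 4 - 1) * (k 4 - 1 + 1) + (k 5 - 1) * (k 5 - 1 + 1) + (k 6 - 1) * (k 6 - 1 + 1) + (k 7 - 1) * (k 7 - 1 + 1)) := ((((((((Int.even_mul_succ_self _).add (Int.even_mul_succ_self _)).add (Int.even_mul_succ_self _)).add (Int.even_mul_succ_self _)).add (Int.even_mul_succ_self _)).add (Int.even_mul_succ_self _)).add (Int.even_mul_succ_self _)).add (Int.even_mul_succ_self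 _))
    obtain ⟨c, hcc⟩ := he
    have hcQ : ((k 0 : ℚ) - 1) * ((k 0 : ℚ) - 1 + 1) + ((k 1 : ℚ) - 1) * ((k 1 : ℚ) - 1 + 1) + ((k 2 : ℚ) - 1) * ((k 2 : ℚ) - 1 + 1) + ((k 3 : ℚ) - 1) * ((k 3 : ℚ) - 1 + 1) + ((k 4 : ℚ) - 1) * ((k 4 : ℚ) - 1 + 1) + ((k 5 : ℚ) - 1) * ((k 5 : ℚ) - 1 + 1) + ((k 6 : ℚ) - 1) * ((k 6 : ℚ) - 1 + 1) + ((k 7 : ℚ) - 1) * ((k 7 : ℚ) - 1 + 1) = (c : ℚ) + c := by exact_mod_cast hcc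
    refine ⟨-(2*a*b) + c + m1 + m2, ?_⟩
    simp only [BB, Fin.sum_univ_eight, hk, ha, hb]
    push_cast
    linear_combination hcQ + hm1 + hm2
  · apply Set.eq_of_subset_of_subset
    · rintro y ⟨x, hx, rfl⟩
      obtain ⟨⟨a, ha⟩, ⟨b, hb⟩, hc | hc⟩ := hx
      · choose k hk using hc
        have h2 : x 2 = (k 0 : ℚ) := hk 0
        have h3 : x 3 = (k 1 : ℚ) := hk 1
        have h4 : x 4 = (k 2 : ℚ) := hk 2
        have h5 : x 5 = (k 3 : ℚ) := hk 3
        have h6 : x 6 = (k 4 : ℚ) := hk 4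
        have h7 : x 7 = (k 5 : ℚ) := hk 5
        have h8 : x 8 = (k 6 : ℚ) := hk 6
        have h9 : x 9 = (k 7 : ℚ) := hk 7
        show Ff x ∈ LB
        simp only [LB, Set.mem_setOf_eq]
        refine ⟨⟨a + b - k 0 + k 2 + k 3 + k 4, ?_⟩, ⟨a + b - k 1 + k 2 + k 3 + k 4, ?_⟩, ?_, ⟨a + k 2 + k 4, ?_⟩, ⟨a + b - k 0 - k 1 + k 2 + k 3 + k 4 - k 7, ?_⟩⟩
        · rw [FA0]; simp only [ha, hb, h2, h3, h4, h5, h6, h7, h8, h9]; push_cast; ring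
        · rw [FA1]; simp only [ha, hb, h2, h3, h4, h5, h6, h7, h8, h9]; push_cast; ring
        · intro i; fin_cases i
          · refine ⟨a + k 3 + k 4, ?_⟩
            show Ff x 2 = _
            rw [FA2]; simp only [ha, hb, h2, h3, h4, h5, h6, h7, h8, h9]; push_cast; ring
          · refine ⟨a + b + 2*k 2 + k 3 + k 4, ?_⟩
            show Ff x 3 = _
            rw [FA3]; simp only [ha, hb, h2, h3, h4, h5, h6, h7, h8, h9]; push_cast; ring
          · refine ⟨-b - k 3 - k 4, ?_⟩
            show Ff x 4 = _
            rw [FA4]; simp only [ha, hb, h2, h3, h4, h5, h6, h7, h8, h9]; push_cast; ring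
          · refine ⟨-k 3 + k 4, ?_⟩
            show Ff x 5 = _
            rw [FA5]; simp only [ha, hb, h2, h3, h4, h5, h6, h7, h8, h9]; push_cast; ring
          · refine ⟨a + b - k 0 - k 1 + k 2 + k 3 + k 4 - k 5, ?_⟩
            show Ff x 6 = _
            rw [FA6]; simp only [ha, hb, h2, h3, h4, h5, h6, h7, h8, h9]; push_cast; ring
          · refine ⟨a + b - k 0 - k 1 + k 2 + k 3 + k 4 + k 5, ?_⟩
            show Ff x 7 = _
            rw [FA7]; simp only [ha, hb, h2, h3, h4, h5, h6, h7, h8, h9]; push_cast; ring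
          · refine ⟨-k 6 - k 7, ?_⟩
            show Ff x 8 = _
            rw [FA8]; simp only [ha, hb, h2, h3, h4, h5, h6, h7, h8, h9]; push_cast; ring
          · refine ⟨k 6 - k 7, ?_⟩
            show Ff x 9 = _
            rw [FA9]; simp only [ha, hb, h2, h3, h4, h5, h6, h7, h8, h9]; push_cast; ring
        · rw [FA2, FA3, FA4, FA5]; simp only [ha, hb, h2, h3, h4, h5, h6, h7, h8, h9]; push_cast; ring
        · rw [FA6, FA7, FA8, FA9]; simp only [ha, hb, h2, h3, h4, h5, h6, h7, h8, h9]; push_cast; ring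
      · choose k hk using hc
        have h2 : x 2 = (k 0 : ℚ) + 1/2 := hk 0
        have h3 : x 3 = (k 1 : ℚ) + 1/2 := hk 1
        have h4 : x 4 = (k 2 : ℚ) + 1/2 := hk 2
        have h5 : x 5 = (k 3 : ℚ) + 1/2 := hk 3
        have h6 : x 6 = (k 4 : ℚ) + 1/2 := hk 4
        have h7 : x 7 = (k 5 : ℚ) + 1/2 := hk 5
        have h8 : x 8 = (k 6 : ℚ) + 1/2 := hk 6
        have h9 : x 9 = (k 7 : ℚ) + 1/2 := hk 7
        show Ff x ∈ LB
        simp only [LB, Set.mem_setOf_eq]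
        refine ⟨⟨a + b - k 0 + k 2 + k 3 + k 4 + 1, ?_⟩, ⟨a + b - k 1 + k 2 + k 3 + k 4 + 1, ?_⟩, ?_, ⟨a + k 2 + k 4 + 1, ?_⟩, ⟨a + b - k 0 - k 1 + k 2 + k 3 + k 4 - k 7, ?_⟩⟩
        · rw [FA0]; simp only [ha, hb, h2, h3, h4, h5, h6, h7, h8, h9]; push_cast; ring
        · rw [FA1]; simp only [ha, hb, h2, h3, h4, h5, h6, h7, h8, h9]; push_cast; ring
        · intro i; fin_cases i
          · refine ⟨a + k 3 + k 4 + 1, ?_⟩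
            show Ff x 2 = _
            rw [FA2]; simp only [ha, hb, h2, h3, h4, h5, h6, h7, h8, h9]; push_cast; ring
          · refine ⟨a + b + 2*k 2 + k 3 + k 4 + 2, ?_⟩
            show Ff x 3 = _
            rw [FA3]; simp only [ha, hb, h2, h3, h4, h5, h6, h7, h8, h9]; push_cast; ring
          · refine ⟨-b - k 3 - k 4 - 1, ?_⟩
            show Ff x 4 = _
            rw [FA4]; simp only [ha, hb, h2, h3, h4, h5, h6, h7, h8, h9]; push_cast; ring
          · refine ⟨-k 3 + k 4, ?_⟩
            show Ff x 5 = _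
            rw [FA5]; simp only [ha, hb, h2, h3, h4, h5, h6, h7, h8, h9]; push_cast; ring
          · refine ⟨a + b - k 0 - k 1 + k 2 + k 3 + k 4 - k 5, ?_⟩
            show Ff x 6 = _
            rw [FA6]; simp only [ha, hb, h2, h3, h4, h5, h6, h7, h8, h9]; push_cast; ring
          · refine ⟨a + b - k 0 - k 1 + k 2 + k 3 + k 4 + k 5 + 1, ?_⟩
            show Ff x 7 = _
            rw [FA7]; simp only [ha, hb, h2, h3, h4, h5, h6, h7, h8, h9]; push_cast; ring
          · refine ⟨-k 6 - k 7 - 1, ?_⟩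
            show Ff x 8 = _
            rw [FA8]; simp only [ha, hb, h2, h3, h4, h5, h6, h7, h8, h9]; push_cast; ring
          · refine ⟨k 6 - k 7, ?_⟩
            show Ff x 9 = _
            rw [FA9]; simp only [ha, hb, h2, h3, h4, h5, h6, h7, h8, h9]; push_cast; ring
        · rw [FA2, FA3, FA4, FA5]; simp only [ha, hb, h2, h3, h4, h5, h6, h7, h8, h9]; push_cast; ring
        · rw [FA6, FA7, FA8, FA9]; simp only [ha, hb, h2, h3, h4, h5, h6, h7, h8, h9]; push_cast; ring
    · intro y hy
      obtain ⟨⟨a, ha⟩, ⟨b, hb⟩, hc, ⟨m1, hm1⟩, ⟨m2, hm2⟩⟩ := hy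
      choose k hk using hc
      have h2 : y 2 = (k 0 : ℚ) := hk 0
      have h3 : y 3 = (k 1 : ℚ) := hk 1
      have h4 : y 4 = (k 2 : ℚ) := hk 2
      have h5 : y 5 = (k 3 : ℚ) := hk 3
      have h6 : y 6 = (k 4 : ℚ) := hk 4
      have h7 : y 7 = (k 5 : ℚ) := hk 5
      have h8 : y 8 = (k 6 : ℚ) := hk 6
      have h9 : y 9 = (k 7 : ℚ) := hk 7
      rw [h2, h3, h4, h5] at hm1
      rw [h6, h7, h8, h9] at hm2
      refine ⟨Gf y, ?_, fEquiv.right_inv y⟩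
      show Gf y ∈ LA
      simp only [LA, Set.mem_setOf_eq]
      rcases Int.even_or_odd (k 4 + k 5) with ⟨t, ht⟩ | ⟨t, ht⟩
      · have htQ : (k 4 : ℚ) + k 5 = t + t := by exact_mod_cast ht
        refine ⟨⟨2*a + 2*b - k 1 + k 2 - k 4 - k 5, ?_⟩, ⟨2*a + 2*b - k 0 - k 1 - k 4 - k 5, ?_⟩, Or.inl ?_⟩
        · rw [GA0]; simp only [ha, hb, h2, h3, h4, h5, h6, h7, h8, h9]; push_cast; ring
        · rw [GA1]; simp only [ha, hb, h2, h3, h4, h5, h6, h7, h8, h9]; push_cast; ring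
        · intro i; fin_cases i
          · refine ⟨b - t, ?_⟩
            show Gf y 2 = _
            rw [GA2]; simp only [ha, hb, h2, h3, h4, h5, h6, h7, h8, h9]; push_cast; linarith [htQ, hm1, hm2]
          · refine ⟨a - t, ?_⟩
            show Gf y 3 = _
            rw [GA3]; simp only [ha, hb, h2, h3, h4, h5, h6, h7, h8, h9]; push_cast; linarith [htQ, hm1, hm2]
          · refine ⟨-a - b + k 1 + t, ?_⟩
            show Gf y 4 = _
            rw [GA4]; simp only [ha, hb, h2, h3, h4, h5, h6, h7, h8, h9]; push_cast; linarith [htQ, hm1, hm2]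
          · refine ⟨-a - b + m1 - k 2 - k 3 + t, ?_⟩
            show Gf y 5 = _
            rw [GA5]; simp only [ha, hb, h2, h3, h4, h5, h6, h7, h8, h9]; push_cast; linarith [htQ, hm1, hm2]
          · refine ⟨-a - b + m1 - k 2 + t, ?_⟩
            show Gf y 6 = _
            rw [GA6]; simp only [ha, hb, h2, h3, h4, h5, h6, h7, h8, h9]; push_cast; linarith [htQ, hm1, hm2]
          · refine ⟨t - k 4, ?_⟩
            show Gf y 7 = _
            rw [GA7]; simp only [ha, hb, h2, h3, h4, h5, h6, h7, h8, h9]; push_cast; linarith [htQ, hm1, hm2]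
          · refine ⟨m2 - t - k 6, ?_⟩
            show Gf y 8 = _
            rw [GA8]; simp only [ha, hb, h2, h3, h4, h5, h6, h7, h8, h9]; push_cast; linarith [htQ, hm1, hm2]
          · refine ⟨t - m2, ?_⟩
            show Gf y 9 = _
            rw [GA9]; simp only [ha, hb, h2, h3, h4, h5, h6, h7, h8, h9]; push_cast; linarith [htQ, hm1, hm2]
      · have htQ : (k 4 : ℚ) + k 5 = 2 * t + 1 := by exact_mod_cast ht
        refine ⟨⟨2*a + 2*b - k 1 + k 2 - k 4 - k 5, ?_⟩, ⟨2*a + 2*b - k 0 - k 1 - k 4 - k 5, ?_⟩, Or.inr ?_⟩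
        · rw [GA0]; simp only [ha, hb, h2, h3, h4, h5, h6, h7, h8, h9]; push_cast; ring
        · rw [GA1]; simp only [ha, hb, h2, h3, h4, h5, h6, h7, h8, h9]; push_cast; ring
        · intro i; fin_cases i
          · refine ⟨b - t - 1, ?_⟩
            show Gf y 2 = _
            rw [GA2]; simp only [ha, hb, h2, h3, h4, h5, h6, h7, h8, h9]; push_cast; linarith [htQ, hm1, hm2]
          · refine ⟨a - t - 1, ?_⟩
            show Gf y 3 = _
            rw [GA3]; simp only [ha, hb, h2, h3, h4, h5, h6, h7, h8, h9]; push_cast; linarith [htQ, hm1, hm2]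
          · refine ⟨-a - b + k 1 + t, ?_⟩
            show Gf y 4 = _
            rw [GA4]; simp only [ha, hb, h2, h3, h4, h5, h6, h7, h8, h9]; push_cast; linarith [htQ, hm1, hm2]
          · refine ⟨-a - b + m1 - k 2 - k 3 + t, ?_⟩
            show Gf y 5 = _
            rw [GA5]; simp only [ha, hb, h2, h3, h4, h5, h6, h7, h8, h9]; push_cast; linarith [htQ, hm1, hm2]
          · refine ⟨-a - b + m1 - k 2 + t, ?_⟩
            show Gf y 6 = _
            rw [GA6]; simp only [ha, hb, h2, h3, h4, h5, h6, h7, h8, h9]; push_cast; linarith [htQ, hm1, hm2]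
          · refine ⟨t - k 4, ?_⟩
            show Gf y 7 = _
            rw [GA7]; simp only [ha, hb, h2, h3, h4, h5, h6, h7, h8, h9]; push_cast; linarith [htQ, hm1, hm2]
          · refine ⟨m2 - t - k 6 - 1, ?_⟩
            show Gf y 8 = _
            rw [GA8]; simp only [ha, hb, h2, h3, h4, h5, h6, h7, h8, h9]; push_cast; linarith [htQ, hm1, hm2]
          · refine ⟨t - m2, ?_⟩
            show Gf y 9 = _
            rw [GA9]; simp only [ha, hb, h2, h3, h4, h5, h6, h7, h8, h9]; push_cast; linarith [htQ, hm1, hm2]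
  · intro x y
    show BB (Ff x) (Ff y) = BA x y
    simp only [BA, BB, Fin.sum_univ_eight, ss0, ss1, ss2, ss3, ss4, ss5, ss6, ss7, FA0, FA1, FA2, FA3, FA4, FA5, FA6, FA7, FA8, FA9]
    ring
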